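/- Let a and b be integers with a ≥ 2 and b ≥ 2. For a prime p not dividing a, let h_a(p) denote the multiplicative order of a modulo p, i.e. the least positive integer h with a^h ≡ 1 (mod p). Then there exists a constant c(a,b) > 0, depending only on a and b, such that ∑_{p prime, p ∤ a} (ln p) / ( p · (h_a(p))^{1/b} ) ≤ c(a,b); in particular this series converges. -/

import Mathlib

open Finset

private lemma rom_order_facts {a p : ℕ} (ha : 2 ≤ a) (hp : p.Prime) (hpa : ¬ p ∣ a) :
    0 < orderOf (a : ZMod p) ∧ orderOf (a : ZMod p) ∣ p - 1 ∧
      p ∣ a ^ orderOf (a : ZMod p) - 1 := by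
  haveI : Fact p.Prime := ⟨hp⟩
  have hne : (a : ZMod p) ≠ 0 := by
    rw [Ne, ZMod.natCast_eq_zero_iff]; exact hpa
  have hpow : (a : ZMod p) ^ (p - 1) = 1 := ZMod.pow_card_sub_one_eq_one hne
  have hp1 : 0 < p - 1 := by have := hp.two_le; omega
  have hfin : IsOfFinOrder (a : ZMod p) := isOfFinOrder_iff_pow_eq_one.mpr ⟨p - 1, hp1, hpow⟩
  refine ⟨hfin.orderOf_pos, orderOf_dvd_of_pow_eq_one hpow, ?_⟩
  have h1 : ((a ^ orderOf (a : ZMod p) : ℕ) : ZMod p) = ((1 : ℕ) : ZMod p) := by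
    push_cast
    rw [pow_orderOf_eq_one]
  have h2 := (ZMod.natCast_eq_natCast_iff _ _ _).mp h1
  have h3 : 1 ≤ a ^ orderOf (a : ZMod p) := Nat.one_le_pow _ _ (by omega)
  exact (Nat.modEq_iff_dvd' h3).mp h2.symm

private lemma rom_sum_log_le {a : ℕ} (ha : 2 ≤ a) {h : ℕ} (hh : 1 ≤ h) (t : Finset ℕ)
    (ht : ∀ p ∈ t, p.Prime ∧ p ∣ a ^ h - 1) :
    ∑ p ∈ t, Real.log p ≤ (h : ℝ) * Real.log a := by
  have hprod : (∏ p ∈ t, p) ∣ a ^ h - 1 :=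
    Finset.prod_primes_dvd _ (fun p hp => (ht p hp).1.prime) (fun p hp => (ht p hp).2)
  have h2 : 2 ≤ a ^ h := le_trans ha (Nat.le_self_pow (by omega) a)
  have hle : (∏ p ∈ t, p) ≤ a ^ h := le_trans (Nat.le_of_dvd (by omega) hprod) (by omega)
  have hlogeq : Real.log (∏ p ∈ t, (p : ℝ)) = ∑ p ∈ t, Real.log p :=
    Real.log_prod (fun p hp => by exact_mod_cast (ht p hp).1.pos.ne')
  rw [← hlogeq]
  calc Real.log (∏ p ∈ t, (p : ℝ)) ≤ Real.log ((a : ℝ) ^ h) := by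
        apply Real.log_le_log
        · exact Finset.prod_pos fun p hp => by exact_mod_cast (ht p hp).1.pos
        · rw [← Nat.cast_prod]
          exact_mod_cast hle
    _ = (h : ℝ) * Real.log a := by rw [Real.log_pow]

private lemma rom_harmonic (n : ℕ) :
    ∑ k ∈ Finset.Icc 1 n, (1 / (k : ℝ)) ≤ 1 + Real.log n := by
  have h1 : ∑ k ∈ Finset.Icc 1 n, (1 / (k : ℝ)) = ((harmonic n : ℚ) : ℝ) := by
    rw [harmonic]
    push_cast
    rw [← Finset.Ico_add_one_right_eq_Icc, Finset.sum_Ico_eq_sum_range]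
    simp [add_comm, one_div]
  rw [h1]
  exact harmonic_le_one_add_log n


private lemma rom_fiber_aux (b : ℕ) (hb : 2 ≤ b) {H : ℝ} (H1 : 1 ≤ H) :
    2 * Real.log H * (1 + Real.log H) ≤ 50 * (b : ℝ) ^ 2 * H ^ ((1 : ℝ) / (2 * b)) := by
  have H0 : (0 : ℝ) < H := lt_of_lt_of_le one_pos H1
  have hbR : (2 : ℝ) ≤ (b : ℝ) := by exact_mod_cast hb
  have hεpos : (0 : ℝ) < 1 / (4 * b) := by positivity
  have hlog : Real.log H ≤ 4 * (b : ℝ) * H ^ ((1 : ℝ) / (4 * b)) := by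
    have h1 := Real.log_le_rpow_div (le_of_lt H0) hεpos
    rw [div_div_eq_mul_div, div_one] at h1
    linarith [h1]
  have hHε : (1 : ℝ) ≤ H ^ ((1 : ℝ) / (4 * b)) := by
    calc (1:ℝ) = H ^ (0:ℝ) := (Real.rpow_zero H).symm
      _ ≤ H ^ ((1:ℝ)/(4*b)) := Real.rpow_le_rpow_of_exponent_le H1 (le_of_lt hεpos)
  have key : 1 + Real.log H ≤ 5 * (b : ℝ) * H ^ ((1 : ℝ) / (4 * b)) := by
    nlinarith [hlog, hHε]
  have hlognn : 0 ≤ Real.log H := Real.log_nonneg H1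
  have hsq : (1 + Real.log H) ^ 2 ≤ 25 * (b:ℝ)^2 * (H ^ ((1:ℝ)/(4*b)))^2 := by
    nlinarith [key, hlognn, hHε]
  have hrw : (H ^ ((1:ℝ)/(4*b)))^2 = H ^ ((1:ℝ)/(2*b)) := by
    rw [← Real.rpow_natCast (H ^ ((1:ℝ)/(4*b))) 2, ← Real.rpow_mul (le_of_lt H0)]
    norm_num
    ring_nf
  rw [hrw] at hsq
  nlinarith [hsq, hlognn]

private lemma rom_fiber {a b : ℕ} (ha : 2 ≤ a) (hb : 2 ≤ b) {h : ℕ} (hh : 1 ≤ h)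
    (t : Finset ℕ) (ht : ∀ p ∈ t, p.Prime ∧ ¬ p ∣ a ∧ orderOf (a : ZMod p) = h) :
    ∑ p ∈ t, Real.log p / ((p : ℝ) * (h : ℝ) ^ ((1 : ℝ) / (b : ℝ))) ≤
      (50 * (b : ℝ) ^ 2 + a) * (h : ℝ) ^ (-(1 + 1 / (2 * (b : ℝ)))) := by
  have hbR : (2 : ℝ) ≤ (b : ℝ) := by exact_mod_cast hb
  have H1 : (1 : ℝ) ≤ (h : ℝ) := by exact_mod_cast hh
  have H0 : (0 : ℝ) < (h : ℝ) := lt_of_lt_of_le one_pos H1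
  set H : ℝ := (h : ℝ) with hH
  set β : ℝ := (1 : ℝ) / (b : ℝ) with hβ
  have hβpos : 0 < β := by positivity
  have hHβ : 0 < H ^ β := Real.rpow_pos_of_pos H0 β
  -- facts about each p in t
  have key : ∀ p ∈ t, p.Prime ∧ h ∣ p - 1 ∧ p ∣ a ^ h - 1 ∧ h + 1 ≤ p := by
    intro p hp
    obtain ⟨hprime, hpa, hord⟩ := ht p hp
    obtain ⟨h1, h2, h3⟩ := rom_order_facts ha hprime hpa
    rw [hord] at h1 h2 h3
    have hp2 := hprime.two_le
    have : h ≤ p - 1 := Nat.le_of_dvd (by omega) h2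
    exact ⟨hprime, h2, h3, by omega⟩
  rw [← Finset.sum_filter_add_sum_filter_not t (fun p => p ≤ h ^ 2)]
  -- the small-prime part
  set t₁ := t.filter (fun p => p ≤ h ^ 2) with ht₁
  set t₂ := t.filter (fun p => ¬ p ≤ h ^ 2) with ht₂
  have part1 : ∑ p ∈ t₁, Real.log p / ((p : ℝ) * H ^ β) ≤
      50 * (b : ℝ) ^ 2 * H ^ (-(1 + 1 / (2 * (b : ℝ)))) := by
    have termbd : ∀ p ∈ t₁, Real.log p / ((p : ℝ) * H ^ β) ≤
        (2 * Real.log H / H ^ (1 + β)) * (1 / (((p - 1) / h : ℕ) : ℝ)) := by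
      intro p hp1
      rw [ht₁, Finset.mem_filter] at hp1
      obtain ⟨hpt, hple⟩ := hp1
      obtain ⟨hprime, hdvd, _, hlt⟩ := key p hpt
      set k : ℕ := (p - 1) / h with hk
      have hkmul : k * h = p - 1 := Nat.div_mul_cancel hdvd
      have hk1 : 1 ≤ k := by
        rcases Nat.eq_zero_or_pos k with h0 | h1
        · rw [h0] at hkmul; omega
        · exact h1
      have hkR : (k : ℝ) * H ≤ (p : ℝ) := by
        have hn : k * h ≤ p := by omega
        show (k : ℝ) * (h : ℝ) ≤ (p : ℝ)
        exact_mod_cast hn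
      have hnum : Real.log p ≤ 2 * Real.log H := by
        have hple' : (p : ℝ) ≤ H ^ 2 := by
          rw [hH]; exact_mod_cast hple
        calc Real.log p ≤ Real.log (H ^ 2) :=
              Real.log_le_log (by exact_mod_cast hprime.pos) hple'
          _ = 2 * Real.log H := by rw [Real.log_pow]; norm_num
      have hden : (k : ℝ) * H ^ (1 + β) ≤ (p : ℝ) * H ^ β := by
        rw [Real.rpow_add H0, Real.rpow_one]
        calc (k : ℝ) * (H * H ^ β) = ((k : ℝ) * H) * H ^ β := by ring
          _ ≤ (p : ℝ) * H ^ β := by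
              apply mul_le_mul_of_nonneg_right hkR (le_of_lt hHβ)
      have hdenpos : (0 : ℝ) < (k : ℝ) * H ^ (1 + β) := by
        have : (0:ℝ) < (k:ℝ) := by exact_mod_cast hk1
        positivity
      calc Real.log p / ((p : ℝ) * H ^ β) ≤ 2 * Real.log H / ((k : ℝ) * H ^ (1 + β)) :=
            div_le_div₀ (by positivity) hnum hdenpos hden
        _ = (2 * Real.log H / H ^ (1 + β)) * (1 / (k : ℝ)) := by
            field_simp
    have hsum1 : ∑ p ∈ t₁, Real.log p / ((p : ℝ) * H ^ β) ≤
        (2 * Real.log H / H ^ (1 + β)) * ∑ p ∈ t₁, (1 / (((p - 1) / h : ℕ) : ℝ)) := by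
      rw [Finset.mul_sum]
      exact Finset.sum_le_sum termbd
    have hinj : ∀ x ∈ t₁, ∀ y ∈ t₁, (x - 1) / h = (y - 1) / h → x = y := by
      intro x hx y hy hxy
      rw [ht₁, Finset.mem_filter] at hx hy
      obtain ⟨_, hxd, _, hxlt⟩ := key x hx.1
      obtain ⟨_, hyd, _, hylt⟩ := key y hy.1
      have hx1 : (x - 1) / h * h = x - 1 := Nat.div_mul_cancel hxd
      have hy1 : (y - 1) / h * h = y - 1 := Nat.div_mul_cancel hyd
      rw [hxy] at hx1
      omega
    have hsum2 : ∑ p ∈ t₁, (1 / (((p - 1) / h : ℕ) : ℝ)) ≤ 1 + Real.log H := by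
      calc ∑ p ∈ t₁, (1 / (((p - 1) / h : ℕ) : ℝ))
          = ∑ k ∈ t₁.image (fun p => (p - 1) / h), (1 / (k : ℝ)) :=
            by rw [Finset.sum_image hinj]
        _ ≤ ∑ k ∈ Finset.Icc 1 h, (1 / (k : ℝ)) := by
            apply Finset.sum_le_sum_of_subset_of_nonneg
            · intro k hk
              rw [Finset.mem_image] at hk
              obtain ⟨p, hp, rfl⟩ := hk
              rw [ht₁, Finset.mem_filter] at hp
              obtain ⟨_, hdvd, _, hlt⟩ := key p hp.1
              have hkmul : (p - 1) / h * h = p - 1 := Nat.div_mul_cancel hdvd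
              have hple := hp.2
              have hexp : h ^ 2 = h * h := sq h
              rw [Finset.mem_Icc]
              constructor
              · rcases Nat.eq_zero_or_pos ((p - 1) / h) with h0 | h1
                · rw [h0] at hkmul; omega
                · exact h1
              · by_contra hcon
                push_neg at hcon
                have h2 : (h + 1) * h ≤ (p - 1) / h * h := Nat.mul_le_mul_right h hcon
                rw [hkmul] at h2
                have h3 : (h + 1) * h = h * h + h := by ring
                omega
            · intro k _ _
              positivity
        _ ≤ 1 + Real.log H := rom_harmonic h
    have hconst : 0 ≤ 2 * Real.log H / H ^ (1 + β) := by
      have := Real.log_nonneg H1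
      positivity
    have hb0 : (b : ℝ) ≠ 0 := by positivity
    have hpow : H ^ ((1 : ℝ) / (2 * b)) / H ^ (1 + β) = H ^ (-(1 + 1 / (2 * (b : ℝ)))) := by
      rw [← Real.rpow_sub H0]
      congr 1
      rw [hβ]
      field_simp
      ring
    have haux := rom_fiber_aux b hb H1
    calc ∑ p ∈ t₁, Real.log p / ((p : ℝ) * H ^ β)
        ≤ (2 * Real.log H / H ^ (1 + β)) * (1 + Real.log H) :=
          le_trans hsum1 (mul_le_mul_of_nonneg_left hsum2 hconst)
      _ = (2 * Real.log H * (1 + Real.log H)) / H ^ (1 + β) := by ring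
      _ ≤ (50 * (b : ℝ) ^ 2 * H ^ ((1 : ℝ) / (2 * b))) / H ^ (1 + β) := by
          gcongr
      _ = 50 * (b : ℝ) ^ 2 * (H ^ ((1 : ℝ) / (2 * b)) / H ^ (1 + β)) := by ring
      _ = 50 * (b : ℝ) ^ 2 * H ^ (-(1 + 1 / (2 * (b : ℝ)))) := by rw [hpow]
  have part2 : ∑ p ∈ t₂, Real.log p / ((p : ℝ) * H ^ β) ≤
      (a : ℝ) * H ^ (-(1 + 1 / (2 * (b : ℝ)))) := by
    have termbd2 : ∀ p ∈ t₂, Real.log p / ((p : ℝ) * H ^ β) ≤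
        H ^ (-(2 + β)) * Real.log p := by
      intro p hp2
      rw [ht₂, Finset.mem_filter] at hp2
      obtain ⟨hpt, hpgt⟩ := hp2
      push_neg at hpgt
      obtain ⟨hprime, _, _, _⟩ := key p hpt
      have hlogp : 0 ≤ Real.log p := Real.log_nonneg (by exact_mod_cast hprime.one_lt.le)
      have hpR : H ^ ((2 : ℝ) + β) ≤ (p : ℝ) * H ^ β := by
        rw [Real.rpow_add H0]
        apply mul_le_mul_of_nonneg_right _ (le_of_lt hHβ)
        have h2 : h ^ 2 ≤ p := le_of_lt hpgt
        rw [show ((2 : ℝ) : ℝ) = ((2 : ℕ) : ℝ) by norm_num, Real.rpow_natCast]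
        calc H ^ (2 : ℕ) = ((h ^ 2 : ℕ) : ℝ) := by push_cast; ring
          _ ≤ (p : ℝ) := by exact_mod_cast h2
      have hposd : (0 : ℝ) < H ^ ((2 : ℝ) + β) := Real.rpow_pos_of_pos H0 _
      calc Real.log p / ((p : ℝ) * H ^ β) ≤ Real.log p / H ^ ((2 : ℝ) + β) := by
            apply div_le_div_of_nonneg_left hlogp hposd hpR
        _ = H ^ (-(2 + β)) * Real.log p := by
            rw [Real.rpow_neg (le_of_lt H0)]
            field_simp
    have hdvd2 : ∀ p ∈ t₂, p.Prime ∧ p ∣ a ^ h - 1 := by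
      intro p hp2
      rw [ht₂, Finset.mem_filter] at hp2
      obtain ⟨hprime, _, hdvd, _⟩ := key p hp2.1
      exact ⟨hprime, hdvd⟩
    have hsum3 : ∑ p ∈ t₂, Real.log p / ((p : ℝ) * H ^ β) ≤
        H ^ (-(2 + β)) * ((h : ℝ) * Real.log a) := by
      calc ∑ p ∈ t₂, Real.log p / ((p : ℝ) * H ^ β)
          ≤ ∑ p ∈ t₂, H ^ (-(2 + β)) * Real.log p := Finset.sum_le_sum termbd2
        _ = H ^ (-(2 + β)) * ∑ p ∈ t₂, Real.log p := by rw [Finset.mul_sum]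
        _ ≤ H ^ (-(2 + β)) * ((h : ℝ) * Real.log a) := by
            apply mul_le_mul_of_nonneg_left (rom_sum_log_le ha hh t₂ hdvd2)
              (le_of_lt (Real.rpow_pos_of_pos H0 _))
    have hloga : Real.log a ≤ (a : ℝ) := by
      have h1 : (0 : ℝ) < a := by positivity
      linarith [Real.log_le_sub_one_of_pos h1]
    have haR : (0 : ℝ) ≤ (a : ℝ) := by positivity
    have hexp2 : H ^ (-(2 + β)) * (h : ℝ) = H ^ (-(1 + β)) := by
      rw [show ((h : ℝ)) = H ^ (1 : ℝ) by rw [Real.rpow_one], ← Real.rpow_add H0]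
      congr 1
      ring
    have hexp3 : H ^ (-(1 + β)) ≤ H ^ (-(1 + 1 / (2 * (b : ℝ)))) := by
      apply Real.rpow_le_rpow_of_exponent_le H1
      rw [hβ]
      have hbpos : (0 : ℝ) < (b : ℝ) := by positivity
      have : 1 / (2 * (b : ℝ)) ≤ 1 / (b : ℝ) := by
        apply div_le_div_of_nonneg_left one_pos.le hbpos
        linarith
      linarith
    calc ∑ p ∈ t₂, Real.log p / ((p : ℝ) * H ^ β)
        ≤ H ^ (-(2 + β)) * ((h : ℝ) * Real.log a) := hsum3
      _ = (H ^ (-(2 + β)) * (h : ℝ)) * Real.log a := by ring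
      _ = H ^ (-(1 + β)) * Real.log a := by rw [hexp2]
      _ ≤ H ^ (-(1 + 1 / (2 * (b : ℝ)))) * (a : ℝ) := by
          apply mul_le_mul hexp3 hloga (Real.log_nonneg (by exact_mod_cast (le_trans one_le_two ha)))
            (le_of_lt (Real.rpow_pos_of_pos H0 _))
      _ = (a : ℝ) * H ^ (-(1 + 1 / (2 * (b : ℝ)))) := by ring
  calc ∑ p ∈ t₁, Real.log p / ((p : ℝ) * H ^ β) + ∑ p ∈ t₂, Real.log p / ((p : ℝ) * H ^ β)
      ≤ 50 * (b : ℝ) ^ 2 * H ^ (-(1 + 1 / (2 * (b : ℝ)))) +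
        (a : ℝ) * H ^ (-(1 + 1 / (2 * (b : ℝ)))) := add_le_add part1 part2
    _ = (50 * (b : ℝ) ^ 2 + a) * H ^ (-(1 + 1 / (2 * (b : ℝ)))) := by ring

/-- Let `a, b ≥ 2` be integers, and for a prime `p ∤ a` let `h_a(p)`
be the multiplicative order of `a` mod `p`. Then the series
`∑_{p ∤ a} (ln p)/(p · h_a(p)^(1/b))` over primes `p` converges, and there is a constant
`c(a,b) > 0` bounding it. -/
theorem romanoff_order_series (a b : ℕ) (ha : 2 ≤ a) (hb : 2 ≤ b) :
    ∃ c : ℝ, 0 < c ∧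
      Summable (fun p : ℕ =>
        if p.Prime ∧ ¬ (p ∣ a)
        then Real.log p / ((p : ℝ) * (orderOf (a : ZMod p) : ℝ) ^ ((1 : ℝ) / (b : ℝ)))
        else 0) ∧
      ∑' p : ℕ,
          (if p.Prime ∧ ¬ (p ∣ a)
           then Real.log p / ((p : ℝ) * (orderOf (a : ZMod p) : ℝ) ^ ((1 : ℝ) / (b : ℝ)))
           else 0) ≤ c := by
  classical
  set γ : ℝ := -(1 + 1 / (2 * (b : ℝ))) with hγ
  set K : ℝ := 50 * (b : ℝ) ^ 2 + a with hK
  have hbpos : (0 : ℝ) < (b : ℝ) := by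
    have : (0 : ℕ) < b := by omega
    exact_mod_cast this
  have hK0 : (0 : ℝ) < K := by positivity
  have hγlt : γ < -1 := by
    have h1 : (0 : ℝ) < 1 / (2 * (b : ℝ)) := by positivity
    rw [hγ]; linarith
  have hBsum : Summable (fun n : ℕ => K * (n : ℝ) ^ γ) :=
    (Real.summable_nat_rpow.mpr hγlt).mul_left K
  have hB0 : ∀ n : ℕ, 0 ≤ K * (n : ℝ) ^ γ := by
    intro n
    exact mul_nonneg hK0.le (Real.rpow_nonneg (Nat.cast_nonneg n) γ)
  set g : ℕ → ℝ := fun p =>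
    if p.Prime ∧ ¬ (p ∣ a)
    then Real.log p / ((p : ℝ) * (orderOf (a : ZMod p) : ℝ) ^ ((1 : ℝ) / (b : ℝ)))
    else 0 with hg
  have hg0 : ∀ p, 0 ≤ g p := by
    intro p
    rw [hg]
    dsimp only
    split
    · rename_i hcond
      apply div_nonneg
      · exact Real.log_nonneg (by exact_mod_cast hcond.1.one_lt.le)
      · positivity
    · exact le_refl 0
  set c : ℝ := (∑' n : ℕ, K * (n : ℝ) ^ γ) + 1 with hc
  have hc0 : 0 < c := by
    rw [hc]
    have := tsum_nonneg (L := SummationFilter.unconditional ℕ) hB0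
    linarith
  have hsumle : ∀ s : Finset ℕ, ∑ p ∈ s, g p ≤ c := by
    intro s
    set s' := s.filter (fun p => p.Prime ∧ ¬ p ∣ a) with hs'
    have e1 : ∑ p ∈ s, g p =
        ∑ p ∈ s', Real.log p /
          ((p : ℝ) * (orderOf (a : ZMod p) : ℝ) ^ ((1 : ℝ) / (b : ℝ))) := by
      rw [hs', Finset.sum_filter]
    set T := s'.image (fun p => orderOf (a : ZMod p)) with hT
    have e2 : ∑ j ∈ T, ∑ p ∈ s'.filter (fun p => orderOf (a : ZMod p) = j),
          Real.log p / ((p : ℝ) * (orderOf (a : ZMod p) : ℝ) ^ ((1 : ℝ) / (b : ℝ)))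
        = ∑ p ∈ s', Real.log p /
          ((p : ℝ) * (orderOf (a : ZMod p) : ℝ) ^ ((1 : ℝ) / (b : ℝ))) :=
      Finset.sum_fiberwise_of_maps_to (fun p hp => Finset.mem_image_of_mem _ hp) _
    have fb : ∀ j ∈ T, ∑ p ∈ s'.filter (fun p => orderOf (a : ZMod p) = j),
          Real.log p / ((p : ℝ) * (orderOf (a : ZMod p) : ℝ) ^ ((1 : ℝ) / (b : ℝ)))
        ≤ K * (j : ℝ) ^ γ := by
      intro j hjT
      rw [hT, Finset.mem_image] at hjT
      obtain ⟨p₀, hp₀, hp₀j⟩ := hjT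
      rw [hs', Finset.mem_filter] at hp₀
      have hj1 : 1 ≤ j := by
        have h0 := (rom_order_facts ha hp₀.2.1 hp₀.2.2).1
        rw [hp₀j] at h0
        omega
      have hcond : ∀ p ∈ s'.filter (fun p => orderOf (a : ZMod p) = j),
          p.Prime ∧ ¬ p ∣ a ∧ orderOf (a : ZMod p) = j := by
        intro p hp
        rw [Finset.mem_filter] at hp
        have hp' := hp.1
        rw [hs', Finset.mem_filter] at hp'
        exact ⟨hp'.2.1, hp'.2.2, hp.2⟩
      have e3 : ∑ p ∈ s'.filter (fun p => orderOf (a : ZMod p) = j),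
            Real.log p / ((p : ℝ) * (orderOf (a : ZMod p) : ℝ) ^ ((1 : ℝ) / (b : ℝ)))
          = ∑ p ∈ s'.filter (fun p => orderOf (a : ZMod p) = j),
            Real.log p / ((p : ℝ) * (j : ℝ) ^ ((1 : ℝ) / (b : ℝ))) := by
        apply Finset.sum_congr rfl
        intro p hp
        rw [(hcond p hp).2.2]
      rw [e3]
      exact rom_fiber ha hb hj1 _ hcond
    calc ∑ p ∈ s, g p
        = ∑ j ∈ T, ∑ p ∈ s'.filter (fun p => orderOf (a : ZMod p) = j),
            Real.log p / ((p : ℝ) * (orderOf (a : ZMod p) : ℝ) ^ ((1 : ℝ) / (b : ℝ))) := by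
          rw [e1, e2]
      _ ≤ ∑ j ∈ T, K * (j : ℝ) ^ γ := Finset.sum_le_sum fb
      _ ≤ ∑' n : ℕ, K * (n : ℝ) ^ γ := hBsum.sum_le_tsum T (fun n _ => hB0 n)
      _ ≤ c := by rw [hc]; linarith
  have hgsummable : Summable g := summable_of_sum_le hg0 hsumle
  exact ⟨c, hc0, hgsummable, hgsummable.tsum_le_of_sum_le hsumle⟩
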